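/- Let P(z) = ∏_{j=1}^n (z - e^{i t_j}) and write P(e^{it}) = R(t) e^{iφ(t)} where R(t) = |P(e^{it})|. Then for every t such that e^{it} is not a zero of P, |P'(e^{it})|² = R'(t)² + (n/2)² R(t)². -/

import Mathlib

open Complex Real

lemma re_half {z w : ℂ} (hz : ‖z‖ = 1) (hw : ‖w‖ = 1)
    (hzw : z - w ≠ 0) : (z / (z - w)).re = 1 / 2 := by
  have hz0 : z ≠ 0 := by intro h; simp [h] at hz
  have hw0 : w ≠ 0 := by intro h; simp [h] at hw
  have hz' : z⁻¹ = (starRingEnd ℂ) z := Complex.inv_eq_conj (by simpa using hz)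
  have hw' : w⁻¹ = (starRingEnd ℂ) w := Complex.inv_eq_conj (by simpa using hw)
  have hwz : w - z ≠ 0 := by intro h; apply hzw; have := sub_eq_zero.mp h; exact sub_eq_zero.mpr this.symm
  have key : z / (z - w) + (starRingEnd ℂ) (z / (z - w)) = 1 := by
    rw [map_div₀, map_sub, ← hz', ← hw']
    have h2 : z⁻¹ / (z⁻¹ - w⁻¹) = w / (w - z) := by
      field_simp
    rw [h2]
    field_simp
    ring
  have h2 := Complex.add_conj (z / (z - w))
  rw [key] at h2
  have : (2 * (z / (z - w)).re : ℝ) = 1 := by exact_mod_cast h2.symm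
  linarith

/-- `|P'(e^{it})|² = R'(t)² + (n/2)² R(t)²` where `R(t) = |P(e^{it})|`. -/
theorem abs_deriv_sq_eq (n : ℕ) (t : Fin n → ℝ) (P : ℂ → ℂ)
    (hP : P = fun z => ∏ j, (z - Complex.exp (t j * Complex.I)))
    (R : ℝ → ℝ) (hR : R = fun u : ℝ => ‖P (Complex.exp (u * Complex.I))‖)
    (s : ℝ) (hs : P (Complex.exp (s * Complex.I)) ≠ 0) :
    ‖deriv P (Complex.exp (s * Complex.I))‖ ^ 2
      = (deriv R s) ^ 2 + ((n : ℝ) / 2) ^ 2 * (R s) ^ 2 := by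
  set z : ℂ := Complex.exp (s * Complex.I) with hz_def
  set w : Fin n → ℂ := fun j => Complex.exp (t j * Complex.I) with hw_def
  have hz1 : ‖z‖ = 1 := Complex.norm_exp_ofReal_mul_I s
  have hw1 : ∀ j, ‖w j‖ = 1 := fun j => Complex.norm_exp_ofReal_mul_I (t j)
  have hPz : P z = ∏ j, (z - w j) := by rw [hP]
  have hzw : ∀ j, z - w j ≠ 0 := by
    intro j h
    exact hs (by rw [hPz]; exact Finset.prod_eq_zero (Finset.mem_univ j) h)
  -- derivative of P at z
  have hD : HasDerivAt P (∑ j, ∏ k ∈ Finset.univ.erase j, (z - w k)) z := by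
    rw [hP]
    have h := HasDerivAt.finset_prod (u := Finset.univ) (f := fun (j : Fin n) (x : ℂ) => x - w j)
      (f' := fun _ => 1) (x := z) (fun i _ => (hasDerivAt_id z).sub_const (w i))
    simpa [Finset.prod_fn] using h
  set D : ℂ := ∑ j, ∏ k ∈ Finset.univ.erase j, (z - w k) with hD_def
  have hderivP : deriv P z = D := hD.deriv
  set A : ℂ := ∑ j, z / (z - w j) with hA_def
  have hAre : A.re = (n : ℝ) / 2 := by
    rw [hA_def, Complex.re_sum, Finset.sum_congr rfl (fun j _ => re_half hz1 (hw1 j) (hzw j))]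
    simp [Finset.card_univ]
    ring
  have hzD : z * D = P z * A := by
    rw [hD_def, hA_def, hPz, Finset.mul_sum, Finset.mul_sum]
    refine Finset.sum_congr rfl fun j _ => ?_
    rw [← Finset.mul_prod_erase _ _ (Finset.mem_univ j)]
    field_simp [hzw j]
  -- derivative of u ↦ exp(u*I)
  have hg : HasDerivAt (fun u : ℝ => Complex.exp (u * Complex.I)) (z * Complex.I) s := by
    have h1 : HasDerivAt (fun u : ℝ => (u : ℂ) * Complex.I) Complex.I s := by
      simpa using (Complex.ofRealCLM.hasDerivAt (x := s)).mul_const Complex.I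
    simpa using h1.cexp
  have hf : HasDerivAt (fun u : ℝ => P (Complex.exp (u * Complex.I))) (z * Complex.I * D) s := by
    have h := (hD.hasFDerivAt.restrictScalars ℝ).comp_hasDerivAt s hg
    simpa [mul_comm, Function.comp_def] using h
  -- real and imaginary parts
  have hRe : HasDerivAt (fun u : ℝ => (P (Complex.exp (u * Complex.I))).re)
      (z * Complex.I * D).re s := by
    have h := (Complex.reCLM.hasFDerivAt.comp_hasDerivAt s hf)
    simpa [Function.comp_def] using h
  have hIm : HasDerivAt (fun u : ℝ => (P (Complex.exp (u * Complex.I))).im)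
      (z * Complex.I * D).im s := by
    have h := (Complex.imCLM.hasFDerivAt.comp_hasDerivAt s hf)
    simpa [Function.comp_def] using h
  have hN : HasDerivAt (fun u : ℝ => Complex.normSq (P (Complex.exp (u * Complex.I))))
      (2 * ((P z).re * (z * Complex.I * D).re + (P z).im * (z * Complex.I * D).im)) s := by
    simp only [Complex.normSq_apply]
    have h := (hRe.fun_mul hRe).fun_add (hIm.fun_mul hIm)
    refine h.congr_deriv ?_
    ring
  have hN0 : Complex.normSq (P z) ≠ 0 := by
    simpa [Complex.normSq_eq_zero] using hs
  have hRs : R s = ‖P z‖ := by rw [hR]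
  have hRpos : 0 < R s := by rw [hRs]; exact (norm_pos_iff.mpr hs)
  have hsqrt : Real.sqrt (Complex.normSq (P z)) = R s := by
    rw [hRs, Complex.norm_def]
  have hRd : HasDerivAt R (1 / (2 * Real.sqrt (Complex.normSq (P z))) *
      (2 * ((P z).re * (z * Complex.I * D).re + (P z).im * (z * Complex.I * D).im))) s := by
    rw [hR]
    simp only [Complex.norm_def]
    exact (Real.hasDerivAt_sqrt hN0).comp s hN
  -- compute the dot product
  have hconj : (starRingEnd ℂ) (P z) * (z * Complex.I * D)
      = Complex.I * ((Complex.normSq (P z) : ℂ) * A) := by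
    calc (starRingEnd ℂ) (P z) * (z * Complex.I * D)
        = Complex.I * ((starRingEnd ℂ) (P z) * (z * D)) := by ring
      _ = Complex.I * ((starRingEnd ℂ) (P z) * (P z * A)) := by rw [hzD]
      _ = Complex.I * (((starRingEnd ℂ) (P z) * P z) * A) := by ring
      _ = Complex.I * ((Complex.normSq (P z) : ℂ) * A) := by
          rw [mul_comm ((starRingEnd ℂ) (P z)) (P z), Complex.mul_conj]
  have hdot : (P z).re * (z * Complex.I * D).re + (P z).im * (z * Complex.I * D).im
      = -(Complex.normSq (P z) * A.im) := by
    have h := congrArg Complex.re hconj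
    simpa [Complex.mul_re, Complex.mul_im, Complex.conj_re, Complex.conj_im] using h
  have hdRs : deriv R s = -(R s * A.im) := by
    rw [hRd.deriv, hdot, hsqrt]
    have hN' : Complex.normSq (P z) = (R s) ^ 2 := by
      rw [hRs, ← Complex.sq_norm]
    rw [hN']
    field_simp
  -- final computation
  have habsD : ‖D‖ = R s * ‖A‖ := by
    have h : ‖z * D‖ = ‖P z * A‖ := by rw [hzD]
    rw [norm_mul, norm_mul, hz1, one_mul, ← hRs] at h
    exact h
  rw [hderivP, hdRs, habsD]
  have hA2 : ‖A‖ ^ 2 = A.re ^ 2 + A.im ^ 2 := by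
    rw [Complex.sq_norm, Complex.normSq_apply]; ring
  calc (R s * ‖A‖) ^ 2 = (R s) ^ 2 * ‖A‖ ^ 2 := by ring
    _ = (R s) ^ 2 * (A.re ^ 2 + A.im ^ 2) := by rw [hA2]
    _ = (-(R s * A.im)) ^ 2 + ((n : ℝ) / 2) ^ 2 * (R s) ^ 2 := by rw [hAre]; ring
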